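/- Let N ≥ 1 and work in ℝ^N (EuclideanSpace ℝ (Fin N)). Let d : Fin N → ℝ with d_j ≥ 0 for all j, a, b, α > 0, and let w, Ψ ∈ ℝ^N with Ψ_0 = 0. Define h(Φ) = (a/4)‖Φ‖⁴ + (b/2)‖Φ‖² + 1 (so ∇h(Φ) = (a‖Φ‖² + b)•Φ), the Bregman distance D_h(Φ, Ψ) = h(Φ) − h(Ψ) − ⟪∇h(Ψ), Φ − Ψ⟫, G(Φ) = (1/2)·∑_j d_j·Φ_j², P₁w the vector w with first coordinate replaced by 0, and β = ∇h(Ψ) − α·P₁w. Let p* ≥ 0 satisfy p* = ∑_j β_j²/(α·d_j + a·p* + b)², and define Φ⁺ coordinatewise by Φ⁺_j = β_j/(α·d_j + a·p* + b). Then Φ⁺_0 = 0, ‖Φ⁺‖² = p*, and for every Φ ∈ ℝ^N with Φ_0 = 0, G(Φ⁺) + ⟪w, Φ⁺ − Ψ⟫ + (1/α)·D_h(Φ⁺, Ψ) ≤ G(Φ) + ⟪w, Φ − Ψ⟫ + (1/α)·D_h(Φ, Ψ). -/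

import Mathlib

open RealInnerProductSpace

private lemma eucl_norm_sq {N : ℕ} (x : EuclideanSpace ℝ (Fin N)) :
    ‖x‖ ^ 2 = ∑ j, x j ^ 2 := by
  rw [EuclideanSpace.norm_eq, Real.sq_sqrt (by positivity)]
  simp [sq_abs]

private lemma eucl_inner {N : ℕ} (x y : EuclideanSpace ℝ (Fin N)) :
    ⟪x, y⟫ = ∑ j, x j * y j := by
  simp [PiLp.inner_apply, RCLike.inner_apply, conj_trivial, mul_comm]

/-- Closed form of the quartic (P4) Bregman proximal subproblem for PFC models:
with `h(Φ) = (a/4)‖Φ‖⁴ + (b/2)‖Φ‖² + 1`, `∇h(Ψ) = (a‖Ψ‖² + b)•Ψ`,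
`β = ∇h(Ψ) − α·P₁w` and `p*` the fixed point of `p = ∑_j β_j²/(αd_j + ap + b)²`,
the vector `Φ⁺_j = β_j/(αd_j + ap* + b)` satisfies `Φ⁺_0 = 0`, `‖Φ⁺‖² = p*` and
minimizes `G(Φ) + ⟪w, Φ − Ψ⟫ + (1/α)·D_h(Φ, Ψ)` over `{Φ : Φ_0 = 0}`. -/
theorem pfc_quartic_prox_closed_form
    (N : ℕ) (hN : 0 < N)
    (d : Fin N → ℝ) (hd : ∀ j, 0 ≤ d j)
    (a b α : ℝ) (ha : 0 < a) (hb : 0 < b) (hα : 0 < α)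
    (w Ψ : EuclideanSpace ℝ (Fin N))
    (hΨ : Ψ ⟨0, hN⟩ = 0)
    (h : EuclideanSpace ℝ (Fin N) → ℝ)
    (hh : ∀ Φ : EuclideanSpace ℝ (Fin N), h Φ = a / 4 * ‖Φ‖ ^ 4 + b / 2 * ‖Φ‖ ^ 2 + 1)
    (gradh : EuclideanSpace ℝ (Fin N) → EuclideanSpace ℝ (Fin N))
    (hgradh : ∀ Φ : EuclideanSpace ℝ (Fin N), gradh Φ = (a * ‖Φ‖ ^ 2 + b) • Φ)
    (Dh : EuclideanSpace ℝ (Fin N) → EuclideanSpace ℝ (Fin N) → ℝ)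
    (hDh : ∀ Φ Ψ' : EuclideanSpace ℝ (Fin N), Dh Φ Ψ' = h Φ - h Ψ' - ⟪gradh Ψ', Φ - Ψ'⟫)
    (G : EuclideanSpace ℝ (Fin N) → ℝ)
    (hG : ∀ Φ : EuclideanSpace ℝ (Fin N), G Φ = (1 / 2) * ∑ j, d j * Φ j ^ 2)
    (P₁w : EuclideanSpace ℝ (Fin N))
    (hP₁w : ∀ j : Fin N, P₁w j = if j = ⟨0, hN⟩ then 0 else w j)
    (β : EuclideanSpace ℝ (Fin N))
    (hβ : β = gradh Ψ - α • P₁w)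
    (pstar : ℝ) (hpstar0 : 0 ≤ pstar)
    (hpstar : pstar = ∑ j, β j ^ 2 / (α * d j + a * pstar + b) ^ 2)
    (Φp : EuclideanSpace ℝ (Fin N))
    (hΦp : ∀ j : Fin N, Φp j = β j / (α * d j + a * pstar + b)) :
    Φp ⟨0, hN⟩ = 0 ∧ ‖Φp‖ ^ 2 = pstar ∧
      ∀ Φ : EuclideanSpace ℝ (Fin N), Φ ⟨0, hN⟩ = 0 →
        G Φp + ⟪w, Φp - Ψ⟫ + (1 / α) * Dh Φp Ψ ≤
          G Φ + ⟪w, Φ - Ψ⟫ + (1 / α) * Dh Φ Ψ := by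
  have hα' : α ≠ 0 := ne_of_gt hα
  have hc : ∀ j, 0 < α * d j + a * pstar + b := by
    intro j
    have h1 : 0 ≤ α * d j := mul_nonneg hα.le (hd j)
    have h2 : 0 ≤ a * pstar := mul_nonneg ha.le hpstar0
    linarith
  have hβc : ∀ j, β j = (α * d j + a * pstar + b) * Φp j := by
    intro j
    rw [hΦp j, mul_comm, div_mul_cancel₀ _ (hc j).ne']
  have hβ0 : β ⟨0, hN⟩ = 0 := by
    rw [hβ]
    simp only [PiLp.sub_apply, PiLp.smul_apply, smul_eq_mul]
    rw [hgradh, hP₁w]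
    simp [PiLp.smul_apply, hΨ]
  have hΦp0 : Φp ⟨0, hN⟩ = 0 := by rw [hΦp, hβ0, zero_div]
  have hp2 : ∑ j, Φp j ^ 2 = pstar := by
    rw [hpstar]
    refine Finset.sum_congr rfl fun j _ => ?_
    rw [hΦp j, div_pow]
  have hnormΦp : ‖Φp‖ ^ 2 = pstar := by rw [eucl_norm_sq, hp2]
  refine ⟨hΦp0, hnormΦp, ?_⟩
  intro Φ hΦ0
  -- the linear form ⟪β, ·⟫ on the constraint set
  have hB : ∀ (x : EuclideanSpace ℝ (Fin N)), x ⟨0, hN⟩ = 0 →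
      ∑ j, β j * x j = ⟪gradh Ψ, x⟫ - α * ⟪w, x⟫ := by
    intro x h0
    rw [eucl_inner, eucl_inner, Finset.mul_sum, ← Finset.sum_sub_distrib]
    refine Finset.sum_congr rfl fun j _ => ?_
    have h2 : P₁w j * x j = w j * x j := by
      rw [hP₁w j]
      by_cases hj : j = ⟨0, hN⟩
      · subst hj; simp [h0]
      · simp [hj]
    rw [hβ]
    simp only [PiLp.sub_apply, PiLp.smul_apply, smul_eq_mul]
    rw [show α * (w j * x j) = α * (P₁w j * x j) by rw [h2]]
    ring
  -- expansion of the objective (times α) into coordinates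
  have expand : ∀ (x : EuclideanSpace ℝ (Fin N)), x ⟨0, hN⟩ = 0 →
      α * (G x + ⟪w, x - Ψ⟫ + (1 / α) * Dh x Ψ) =
        ((α / 2 * ∑ j, d j * x j ^ 2) + a / 4 * (∑ j, x j ^ 2) ^ 2
          + b / 2 * (∑ j, x j ^ 2) - ∑ j, β j * x j)
        + (1 - α * ⟪w, Ψ⟫ - h Ψ + ⟪gradh Ψ, Ψ⟫) := by
    intro x h0
    rw [hG, hDh, hh x, hB x h0, inner_sub_right w x Ψ,
      inner_sub_right (gradh Ψ) x Ψ, ← eucl_norm_sq,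
      show ‖x‖ ^ 4 = (‖x‖ ^ 2) ^ 2 by ring]
    field_simp
    ring
  refine (mul_le_mul_iff_right₀ hα).mp ?_
  rw [expand Φ hΦ0, expand Φp hΦp0]
  have key : ((α / 2 * ∑ j, d j * Φp j ^ 2) + a / 4 * (∑ j, Φp j ^ 2) ^ 2
          + b / 2 * (∑ j, Φp j ^ 2) - ∑ j, β j * Φp j) ≤
        ((α / 2 * ∑ j, d j * Φ j ^ 2) + a / 4 * (∑ j, Φ j ^ 2) ^ 2
          + b / 2 * (∑ j, Φ j ^ 2) - ∑ j, β j * Φ j) := by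
    set s : ℝ := ∑ j, Φp j * (Φ j - Φp j) with hs
    set q : ℝ := ∑ j, (Φ j - Φp j) ^ 2 with hqdef
    have hq : 0 ≤ q := Finset.sum_nonneg fun j _ => sq_nonneg _
    have hP : ∑ j, Φ j ^ 2 = pstar + 2 * s + q := by
      have : ∑ j, Φ j ^ 2
          = ∑ j, (Φp j ^ 2 + 2 * (Φp j * (Φ j - Φp j)) + (Φ j - Φp j) ^ 2) :=
        Finset.sum_congr rfl fun j _ => by ring
      rw [this, Finset.sum_add_distrib, Finset.sum_add_distrib, ← Finset.mul_sum, hp2,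
        hs, hqdef]
    -- the purely coordinatewise part
    have hL : ∑ j, (α / 2 * (d j * Φ j ^ 2) + b / 2 * Φ j ^ 2 - β j * Φ j)
        = ∑ j, (α / 2 * (d j * Φp j ^ 2) + b / 2 * Φp j ^ 2 - β j * Φp j)
          + ∑ j, (α * d j + b) / 2 * (Φ j - Φp j) ^ 2
          - a * pstar * s := by
      rw [hs, Finset.mul_sum, ← Finset.sum_add_distrib, ← Finset.sum_sub_distrib]
      refine Finset.sum_congr rfl fun j _ => ?_
      rw [hβc j]
      ring
    have hQ : 0 ≤ ∑ j, (α * d j + b) / 2 * (Φ j - Φp j) ^ 2 := by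
      refine Finset.sum_nonneg fun j _ => ?_
      have h1 : 0 ≤ α * d j := mul_nonneg hα.le (hd j)
      positivity
    have split : ∀ x : EuclideanSpace ℝ (Fin N),
        ∑ j, (α / 2 * (d j * x j ^ 2) + b / 2 * x j ^ 2 - β j * x j)
          = (α / 2 * ∑ j, d j * x j ^ 2) + b / 2 * (∑ j, x j ^ 2)
            - ∑ j, β j * x j := by
      intro x
      rw [Finset.sum_sub_distrib, Finset.sum_add_distrib, ← Finset.mul_sum,
        ← Finset.mul_sum]
    rw [split Φ, split Φp] at hL
    have hsq : 0 ≤ a / 4 * (2 * s + q) ^ 2 := by positivity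
    have hpq : 0 ≤ a * pstar / 2 * q :=
      mul_nonneg (by positivity) hq
    have hid : a / 4 * (∑ j, Φ j ^ 2) ^ 2 - a / 4 * (∑ j, Φp j ^ 2) ^ 2
        - a * pstar * s = a / 4 * (2 * s + q) ^ 2 + a * pstar / 2 * q := by
      rw [hP, hp2]
      ring
    linarith
  linarith
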